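/- For ε > 0 let K_ε : ℝ³ → ℝ be the density of the normal distribution N(0, ε·I₃), i.e. K_ε(x) = (2πε)^{−3/2}·exp(−|x|²/(2ε)). Let P be a positive integer and for each p ∈ {1,…,P} let â_p ≥ 0, ã_p ≥ 0 be weights and X̂_p, X̃_p ∈ ℝ³ be points. Then ∫_{ℝ³} | Σ_{p=1}^{P} ( â_p·K_ε(x − X̂_p) − ã_p·K_ε(x − X̃_p) ) | dx ≤ Σ_{p=1}^{P} |â_p − ã_p| + 4·max(ε^{−1/2}, 1)·Σ_{p=1}^{P} ã_p·|X̂_p − X̃_p|. -/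

import Mathlib

open Real MeasureTheory

/- Auxiliary development for the proof of `stmt_14`. -/

namespace Stmt14Proof

noncomputable section

abbrev E3 := EuclideanSpace ℝ (Fin 3)

lemma integrable_gauss3 {b : ℝ} (hb : 0 < b) :
    Integrable (fun x : E3 => Real.exp (-b * ‖x‖ ^ 2)) := by
  have h := (GaussianFourier.integrable_cexp_neg_mul_sq_norm_add (V := E3) (b := (b:ℂ))
    (by simpa using hb) 0 0).norm
  refine h.congr (Filter.Eventually.of_forall fun x => ?_)
  simp [Complex.norm_exp]
  norm_cast
  exact Or.inl rfl

lemma integrable_norm_mul_gauss {b : ℝ} (hb : 0 < b) :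
    Integrable (fun x : E3 => ‖x‖ * Real.exp (-b * ‖x‖ ^ 2)) := by
  have hc : 0 < b / 2 := half_pos hb
  refine ((integrable_gauss3 hc).const_mul ((2 * Real.sqrt (b/2))⁻¹)).mono'
    ((continuous_norm.mul (by continuity)).aestronglyMeasurable)
    (Filter.Eventually.of_forall fun x => ?_)
  have h0 : (0:ℝ) ≤ ‖x‖ * Real.exp (-b * ‖x‖ ^ 2) := by positivity
  rw [Real.norm_of_nonneg h0]
  have h1 : Real.exp (-b * ‖x‖ ^ 2) = Real.exp (-(b/2) * ‖x‖ ^ 2) * Real.exp (-(b/2) * ‖x‖ ^ 2) := by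
    rw [← Real.exp_add]; ring_nf
  have key : ‖x‖ ≤ (2 * Real.sqrt (b/2))⁻¹ * Real.exp ((b/2) * ‖x‖ ^ 2) := by
    have h3 := Real.add_one_le_exp ((b/2) * ‖x‖ ^ 2)
    have hs : 0 < Real.sqrt (b/2) := Real.sqrt_pos.mpr hc
    rw [inv_mul_eq_div, le_div_iff₀ (by positivity)]
    nlinarith [sq_nonneg (Real.sqrt (b/2) * ‖x‖ - 1), Real.sq_sqrt hc.le,
      Real.sqrt_nonneg (b/2), norm_nonneg x]
  rw [h1, ← mul_assoc]
  calc ‖x‖ * Real.exp (-(b/2) * ‖x‖ ^ 2) * Real.exp (-(b/2) * ‖x‖ ^ 2)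
      ≤ ((2 * Real.sqrt (b/2))⁻¹ * Real.exp ((b/2) * ‖x‖ ^ 2)) * Real.exp (-(b/2) * ‖x‖ ^ 2)
        * Real.exp (-(b/2) * ‖x‖ ^ 2) := by
        gcongr
    _ = (2 * Real.sqrt (b/2))⁻¹ * Real.exp (-(b/2) * ‖x‖ ^ 2) := by
        rw [mul_assoc, mul_assoc, ← Real.exp_add, ← Real.exp_add]
        congr 2
        ring


lemma Jn {b : ℝ} (hb : 0 < b) (n : ℕ) :
    ∫ y in Set.Ioi (0:ℝ), y ^ n * Real.exp (-b * y ^ 2) =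
      b ^ (-((n:ℝ)+1)/2) * (1/2) * Real.Gamma (((n:ℝ)+1)/2) := by
  rw [← integral_rpow_mul_exp_neg_mul_rpow two_pos
    (lt_of_lt_of_le neg_one_lt_zero (Nat.cast_nonneg n)) hb]
  refine setIntegral_congr_fun measurableSet_Ioi fun y hy => ?_
  rw [← Real.rpow_natCast y n, ← Real.rpow_natCast y 2]
  norm_num

lemma J2val {b : ℝ} (hb : 0 < b) :
    ∫ y in Set.Ioi (0:ℝ), y ^ 2 * Real.exp (-b * y ^ 2) =
      b ^ (-(3:ℝ)/2) * (Real.sqrt π / 4) := by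
  rw [Jn hb 2]
  simp only [Nat.cast_ofNat]
  rw [show ((2:ℝ)+1)/2 = 1/2 + 1 by norm_num, Real.Gamma_add_one (by norm_num),
    Real.Gamma_one_half_eq, show -((2:ℝ)+1)/2 = -(3:ℝ)/2 by norm_num]
  ring

lemma J3val {b : ℝ} (hb : 0 < b) :
    ∫ y in Set.Ioi (0:ℝ), y ^ 3 * Real.exp (-b * y ^ 2) = b ^ (-(2:ℝ)) * (1/2) := by
  rw [Jn hb 3]
  simp only [Nat.cast_ofNat]
  rw [show ((3:ℝ)+1)/2 = 2 by norm_num, Real.Gamma_two, show -((3:ℝ)+1)/2 = -(2:ℝ) by norm_num]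
  ring

def Kf (ε : ℝ) (x : E3) : ℝ := (2*π*ε) ^ (-(3:ℝ)/2) * Real.exp (-‖x‖^2 / (2*ε))
variable {ε : ℝ}
lemma Kf_nonneg (hε : 0 < ε) (x : E3) : 0 ≤ Kf ε x := by unfold Kf; positivity
lemma Kf_cont (hε : 0 < ε) : Continuous (Kf ε) := by
  unfold Kf
  exact continuous_const.mul (Real.continuous_exp.comp (by continuity))


lemma Kf_eq (hε : 0 < ε) :
    Kf ε = fun x : E3 => (2*π*ε) ^ (-(3:ℝ)/2) * Real.exp (-(2*ε)⁻¹ * ‖x‖^2) := by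
  funext x; unfold Kf; congr 1
  rw [neg_div, div_eq_mul_inv, mul_comm, neg_mul]

lemma integrable_Kf (hε : 0 < ε) : Integrable (Kf ε) := by
  rw [Kf_eq hε]
  exact (integrable_gauss3 (by positivity)).const_mul _

lemma integral_Kf (hε : 0 < ε) : ∫ x, Kf ε x = 1 := by
  have hb : (0:ℝ) < (2*ε)⁻¹ := by positivity
  rw [Kf_eq hε]
  rw [MeasureTheory.integral_const_mul, GaussianFourier.integral_rexp_neg_mul_sq_norm hb]
  have h1 : π / (2*ε)⁻¹ = 2*π*ε := by field_simp
  have h2 : ((Module.finrank ℝ E3 : ℝ)/2) = (3:ℝ)/2 := by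
    simp [finrank_euclideanSpace]
  rw [h1, h2, ← Real.rpow_add (by positivity)]
  norm_num

lemma integrable_norm_Kf (hε : 0 < ε) : Integrable (fun x : E3 => ‖x‖ * Kf ε x) := by
  rw [Kf_eq hε]
  have h := (integrable_norm_mul_gauss (b := (2*ε)⁻¹)
    (by positivity)).const_mul ((2*π*ε) ^ (-(3:ℝ)/2))
  refine h.congr (Filter.Eventually.of_forall fun x => ?_)
  show _ = ‖x‖ * ((2*π*ε) ^ (-(3:ℝ)/2) * Real.exp (-(2*ε)⁻¹ * ‖x‖^2))
  ring

lemma integral_norm_Kf (hε : 0 < ε) :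
    ∫ x, ‖x‖ * Kf ε x ≤ (8/5) * Real.sqrt ε := by
  have hb : (0:ℝ) < (2*ε)⁻¹ := by positivity
  set C : ℝ := (2*π*ε) ^ (-(3:ℝ)/2) with hC
  set b : ℝ := (2*ε)⁻¹ with hbdef
  set c : ℝ := (volume (Metric.ball (0:E3) 1)).toReal with hc
  set J2 : ℝ := ∫ y in Set.Ioi (0:ℝ), y ^ 2 * Real.exp (-b * y ^ 2) with hJ2
  set J3 : ℝ := ∫ y in Set.Ioi (0:ℝ), y ^ 3 * Real.exp (-b * y ^ 2) with hJ3
  have hrad1 := MeasureTheory.integral_fun_norm_addHaar (volume : Measure E3)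
    (fun r : ℝ => C * Real.exp (-b * r^2))
  have hrad2 := MeasureTheory.integral_fun_norm_addHaar (volume : Measure E3)
    (fun r : ℝ => r * (C * Real.exp (-b * r^2)))
  simp only [finrank_euclideanSpace, Fintype.card_fin, smul_eq_mul, nsmul_eq_mul] at hrad1 hrad2
  norm_num at hrad1 hrad2
  -- hrad1 : ∫ x, C * rexp (-(b*‖x‖^2)) = 3 * (c * ∫ y in Ioi 0, y^2 * (C * rexp (-(b*y^2))))
  have pull2 : (∫ y in Set.Ioi (0:ℝ), y ^ 2 * (C * rexp (-(b * y^2)))) = C * J2 := by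
    have h : ∀ y : ℝ, y^2 * (C * rexp (-(b * y^2))) = C * (y^2 * rexp (-b * y^2)) := by
      intro y; rw [neg_mul]; ring
    simp_rw [h]
    exact MeasureTheory.integral_const_mul C _
  have pull3 : (∫ y in Set.Ioi (0:ℝ), y ^ 2 * (y * (C * rexp (-(b * y^2))))) = C * J3 := by
    have h : ∀ y : ℝ, y^2 * (y * (C * rexp (-(b * y^2)))) = C * (y^3 * rexp (-b * y^2)) := by
      intro y; rw [neg_mul]; ring
    simp_rw [h]
    exact MeasureTheory.integral_const_mul C _
  have hKf1 : ∀ x : E3, Kf ε x = C * rexp (-(b * ‖x‖^2)) := by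
    intro x; rw [Kf_eq hε]; simp only [neg_mul]; rfl
  have E1 : (1:ℝ) = 3 * (c * (C * J2)) := by
    rw [← integral_Kf hε]
    simp_rw [hKf1]
    rw [hrad1, pull2]; rfl
  have E2 : (∫ x, ‖x‖ * Kf ε x) = 3 * (c * (C * J3)) := by
    simp_rw [hKf1]
    rw [hrad2, pull3]; rfl
  -- numeric values
  have h2ε : (0:ℝ) < 2*ε := by positivity
  have hbrp : ∀ y : ℝ, b ^ y = (2*ε) ^ (-y) := by
    intro y
    rw [hbdef, Real.inv_rpow h2ε.le, ← Real.rpow_neg h2ε.le]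
  have hJ2v : J2 = (2*ε) ^ ((3:ℝ)/2) * (Real.sqrt π / 4) := by
    rw [hJ2, J2val hb, hbrp]; norm_num
  have hJ3v : J3 = (2*ε) ^ ((2:ℝ)) * (1/2) := by
    rw [hJ3, J3val hb, hbrp]; norm_num
  have hsplit : (2*ε) ^ ((2:ℝ)) = (2*ε) ^ ((3:ℝ)/2) * (2*ε) ^ ((1:ℝ)/2) := by
    rw [← Real.rpow_add h2ε]; norm_num
  have hsqrt : (2*ε) ^ ((1:ℝ)/2) = Real.sqrt (2*ε) := by
    rw [Real.sqrt_eq_rpow]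
  have hJ2pos : 0 < J2 := by
    rw [hJ2v]
    have : 0 < Real.sqrt π := Real.sqrt_pos.mpr Real.pi_pos
    positivity
  have hA : 3*(c*C)*J2 = 1 := by rw [E1]; ring
  have h3cC : 3*(c*C) = 1/J2 := by rw [eq_div_iff hJ2pos.ne']; exact hA
  have hval : (∫ x, ‖x‖ * Kf ε x) = J3 / J2 := by
    rw [E2, show 3*(c*(C*J3)) = (3*(c*C))*J3 by ring, h3cC]; ring
  have hXpos : 0 < (2*ε) ^ ((3:ℝ)/2) := Real.rpow_pos_of_pos h2ε _
  have hπs : 0 < Real.sqrt π := Real.sqrt_pos.mpr Real.pi_pos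
  have hratio : J3 / J2 = 2 * Real.sqrt (2*ε) / Real.sqrt π := by
    rw [hJ3v, hJ2v, hsplit, hsqrt]
    field_simp
    ring
  rw [hval, hratio]
  -- final numeric inequality
  have hsq2 : Real.sqrt (2*ε) = Real.sqrt 2 * Real.sqrt ε := Real.sqrt_mul (by norm_num) ε
  have h2' : Real.sqrt 2 ≤ Real.sqrt (16*π/25) :=
    Real.sqrt_le_sqrt (by nlinarith [Real.pi_gt_d6])
  have h3' : Real.sqrt (16*π/25) = (4/5) * Real.sqrt π := by
    rw [show (16*π/25 : ℝ) = (4/5)^2 * π by ring, Real.sqrt_mul (by positivity),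
      Real.sqrt_sq (by norm_num)]
  rw [div_le_iff₀ hπs, hsq2]
  nlinarith [h2'.trans_eq h3', Real.sqrt_nonneg ε, Real.sqrt_nonneg π, Real.sqrt_nonneg 2]

lemma integrable_norm_shift (hε : 0 < ε) (w : E3) :
    Integrable (fun x : E3 => ‖x + w‖ * Kf ε x) := by
  refine ((integrable_norm_Kf hε).add ((integrable_Kf hε).const_mul ‖w‖)).mono'
    ((((continuous_id.add continuous_const).norm).mul (Kf_cont hε)).aestronglyMeasurable)
    (Filter.Eventually.of_forall fun x => ?_)
  have h0 : 0 ≤ ‖x + w‖ * Kf ε x := mul_nonneg (norm_nonneg _) (Kf_nonneg hε x)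
  rw [Real.norm_of_nonneg h0]
  have h1 : ‖x + w‖ ≤ ‖x‖ + ‖w‖ := norm_add_le x w
  simp only [Pi.add_apply]
  nlinarith [Kf_nonneg hε x]

lemma exp_abs_sub (A B : ℝ) :
    |Real.exp (-A) - Real.exp (-B)| ≤ |A - B| * (Real.exp (-A) + Real.exp (-B)) := by
  have key : ∀ X Y : ℝ, X ≤ Y →
      Real.exp (-X) - Real.exp (-Y) ≤ (Y - X) * (Real.exp (-X) + Real.exp (-Y)) := by
    intro X Y h
    have h1 : 1 - Real.exp (-(Y - X)) ≤ Y - X := by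
      have := Real.add_one_le_exp (-(Y-X)); linarith
    have h2 : Real.exp (-X) - Real.exp (-Y) = Real.exp (-X) * (1 - Real.exp (-(Y-X))) := by
      rw [mul_sub, mul_one, ← Real.exp_add]; ring_nf
    rw [h2]
    calc Real.exp (-X) * (1 - Real.exp (-(Y-X))) ≤ Real.exp (-X) * (Y - X) :=
          mul_le_mul_of_nonneg_left h1 (Real.exp_pos _).le
      _ ≤ (Y - X) * (Real.exp (-X) + Real.exp (-Y)) := by
          nlinarith [Real.exp_pos (-X), Real.exp_pos (-Y), sub_nonneg.mpr h]
  rcases le_total A B with h | h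
  · have hge : 0 ≤ Real.exp (-A) - Real.exp (-B) :=
      sub_nonneg.mpr (Real.exp_le_exp.mpr (neg_le_neg h))
    rw [abs_of_nonneg hge, abs_sub_comm, abs_of_nonneg (sub_nonneg.mpr h)]
    exact key A B h
  · have hle : Real.exp (-A) - Real.exp (-B) ≤ 0 :=
      sub_nonpos.mpr (Real.exp_le_exp.mpr (neg_le_neg h))
    rw [abs_of_nonpos hle, abs_of_nonneg (sub_nonneg.mpr h), neg_sub]
    calc Real.exp (-B) - Real.exp (-A) ≤ (A - B) * (Real.exp (-B) + Real.exp (-A)) := key B A h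
      _ = (A - B) * (Real.exp (-A) + Real.exp (-B)) := by ring

lemma Kf_diff_le (hε : 0 < ε) (x v : E3) :
    |Kf ε (x - v) - Kf ε x| ≤
      (‖v‖ * (‖x - v‖ + ‖x‖) / (2*ε)) * (Kf ε (x - v) + Kf ε x) := by
  have hC : (0:ℝ) < (2*π*ε) ^ (-(3:ℝ)/2) := by positivity
  set C : ℝ := (2*π*ε) ^ (-(3:ℝ)/2) with hCdef
  set A : ℝ := ‖x - v‖^2 / (2*ε) with hA
  set B : ℝ := ‖x‖^2 / (2*ε) with hB
  have e1 : Kf ε (x - v) = C * Real.exp (-A) := by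
    rw [hCdef, hA]; unfold Kf; congr 2; ring
  have e2 : Kf ε x = C * Real.exp (-B) := by
    rw [hCdef, hB]; unfold Kf; congr 2; ring
  rw [e1, e2, ← mul_sub, abs_mul, abs_of_pos hC]
  have hAB : |A - B| ≤ ‖v‖ * (‖x - v‖ + ‖x‖) / (2*ε) := by
    rw [hA, hB, div_sub_div_same, abs_div, abs_of_pos (by positivity : (0:ℝ) < 2*ε)]
    have hnum : |‖x - v‖^2 - ‖x‖^2| ≤ ‖v‖ * (‖x - v‖ + ‖x‖) := by
      have h1 : ‖x - v‖^2 - ‖x‖^2 = (‖x - v‖ - ‖x‖) * (‖x - v‖ + ‖x‖) := by ring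
      rw [h1, abs_mul, abs_of_nonneg (by positivity : (0:ℝ) ≤ ‖x - v‖ + ‖x‖)]
      refine mul_le_mul_of_nonneg_right ?_ (by positivity)
      calc |‖x - v‖ - ‖x‖| ≤ ‖(x - v) - x‖ := abs_norm_sub_norm_le _ _
        _ = ‖v‖ := by rw [sub_sub_cancel_left, norm_neg]
    exact div_le_div_of_nonneg_right hnum (by positivity) -- may need name fix
  calc C * |Real.exp (-A) - Real.exp (-B)|
      ≤ C * (|A - B| * (Real.exp (-A) + Real.exp (-B))) :=
        mul_le_mul_of_nonneg_left (exp_abs_sub A B) hC.le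
    _ ≤ C * ((‖v‖ * (‖x - v‖ + ‖x‖) / (2*ε)) * (Real.exp (-A) + Real.exp (-B))) :=
        mul_le_mul_of_nonneg_left
          (mul_le_mul_of_nonneg_right hAB (by positivity)) hC.le
    _ = (‖v‖ * (‖x - v‖ + ‖x‖) / (2*ε)) * (C * Real.exp (-A) + C * Real.exp (-B)) := by ring

lemma shift_bound (hε : 0 < ε) (v : E3) :
    (∫ x, |Kf ε (x - v) - Kf ε x|) ≤ 4 * (Real.sqrt ε)⁻¹ * ‖v‖ := by
  have hsqε : 0 < Real.sqrt ε := Real.sqrt_pos.mpr hε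
  have hεeq : Real.sqrt ε * Real.sqrt ε = ε := Real.mul_self_sqrt hε.le
  have hKint := integrable_Kf hε
  have hKvint := hKint.comp_sub_right v
  have habs_int : Integrable (fun x : E3 => |Kf ε (x - v) - Kf ε x|) := (hKvint.sub hKint).abs
  rcases le_total ‖v‖ (Real.sqrt ε / 2) with hv | hv
  · -- small shift
    have hf1 : Integrable (fun x : E3 => ‖x - v‖ * Kf ε (x - v)) :=
      (integrable_norm_Kf hε).comp_sub_right v
    have hshift : Integrable (fun y : E3 => ‖y + v‖ * Kf ε y) := integrable_norm_shift hε v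
    have hf2 : Integrable (fun x : E3 => ‖x‖ * Kf ε (x - v)) := by
      refine (hshift.comp_sub_right v).congr (Filter.Eventually.of_forall fun x => ?_)
      simp [sub_add_cancel]
    have hf3 : Integrable (fun x : E3 => ‖x - v‖ * Kf ε x) := by
      refine (integrable_norm_shift hε (-v)).congr (Filter.Eventually.of_forall fun x => ?_)
      simp [sub_eq_add_neg]
    have hf4 := integrable_norm_Kf hε
    have hsum : Integrable (fun x : E3 => ‖x - v‖ * Kf ε (x - v) + ‖x‖ * Kf ε (x - v)
        + (‖x - v‖ * Kf ε x + ‖x‖ * Kf ε x)) := (hf1.add hf2).add (hf3.add hf4)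
    have hG : Integrable (fun x : E3 => ‖v‖ / (2*ε) * (‖x - v‖ * Kf ε (x - v) + ‖x‖ * Kf ε (x - v)
        + (‖x - v‖ * Kf ε x + ‖x‖ * Kf ε x))) := hsum.const_mul _
    have step1 : (∫ x, |Kf ε (x - v) - Kf ε x|) ≤
        ∫ x, ‖v‖ / (2*ε) * (‖x - v‖ * Kf ε (x - v) + ‖x‖ * Kf ε (x - v)
          + (‖x - v‖ * Kf ε x + ‖x‖ * Kf ε x)) := by
      refine integral_mono habs_int hG fun x => ?_
      calc |Kf ε (x - v) - Kf ε x|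
          ≤ (‖v‖ * (‖x - v‖ + ‖x‖) / (2*ε)) * (Kf ε (x - v) + Kf ε x) := Kf_diff_le hε x v
        _ = ‖v‖ / (2*ε) * (‖x - v‖ * Kf ε (x - v) + ‖x‖ * Kf ε (x - v)
            + (‖x - v‖ * Kf ε x + ‖x‖ * Kf ε x)) := by ring
    have I1 : (∫ x : E3, ‖x - v‖ * Kf ε (x - v)) = ∫ x : E3, ‖x‖ * Kf ε x :=
      integral_sub_right_eq_self (fun y : E3 => ‖y‖ * Kf ε y) v
    have hplus : ∀ w : E3, ‖w‖ = ‖v‖ → (∫ x : E3, ‖x + w‖ * Kf ε x) ≤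
        (∫ x : E3, ‖x‖ * Kf ε x) + ‖v‖ := by
      intro w hw
      have hle : (∫ x : E3, ‖x + w‖ * Kf ε x) ≤ ∫ x : E3, (‖x‖ * Kf ε x + ‖v‖ * Kf ε x) := by
        refine integral_mono (integrable_norm_shift hε w) (hf4.add (hKint.const_mul ‖v‖))
          fun x => ?_
        have h1 : ‖x + w‖ ≤ ‖x‖ + ‖v‖ := hw ▸ norm_add_le x w
        nlinarith [Kf_nonneg hε x]
      rw [integral_add hf4 (hKint.const_mul ‖v‖), integral_const_mul, integral_Kf hε,
        mul_one] at hle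
      exact hle
    have I2 : (∫ x : E3, ‖x‖ * Kf ε (x - v)) ≤ (∫ x : E3, ‖x‖ * Kf ε x) + ‖v‖ := by
      have heq : (∫ x : E3, ‖x‖ * Kf ε (x - v)) = ∫ y : E3, ‖y + v‖ * Kf ε y := by
        rw [← integral_sub_right_eq_self (fun y : E3 => ‖y + v‖ * Kf ε y) v]
        refine integral_congr_ae (Filter.Eventually.of_forall fun x => ?_)
        simp [sub_add_cancel]
      rw [heq]; exact hplus v rfl
    have I3 : (∫ x : E3, ‖x - v‖ * Kf ε x) ≤ (∫ x : E3, ‖x‖ * Kf ε x) + ‖v‖ := by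
      have heq : (∫ x : E3, ‖x - v‖ * Kf ε x) = ∫ x : E3, ‖x + (-v)‖ * Kf ε x := by
        refine integral_congr_ae (Filter.Eventually.of_forall fun x => ?_)
        simp [sub_eq_add_neg]
      rw [heq]; exact hplus (-v) (norm_neg v)
    have hM := integral_norm_Kf hε
    set M : ℝ := ∫ x : E3, ‖x‖ * Kf ε x with hMdef
    have step2 : (∫ x, ‖v‖ / (2*ε) * (‖x - v‖ * Kf ε (x - v) + ‖x‖ * Kf ε (x - v)
          + (‖x - v‖ * Kf ε x + ‖x‖ * Kf ε x)))
        = ‖v‖ / (2*ε) * ((∫ x : E3, ‖x - v‖ * Kf ε (x - v)) + (∫ x : E3, ‖x‖ * Kf ε (x - v))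
          + ((∫ x : E3, ‖x - v‖ * Kf ε x) + M)) := by
      have hf12 : Integrable (fun x : E3 => ‖x - v‖ * Kf ε (x - v) + ‖x‖ * Kf ε (x - v)) :=
        hf1.add hf2
      have hf34 : Integrable (fun x : E3 => ‖x - v‖ * Kf ε x + ‖x‖ * Kf ε x) := hf3.add hf4
      rw [integral_const_mul, integral_add hf12 hf34, integral_add hf1 hf2, integral_add hf3 hf4]
    have hsumle : (∫ x : E3, ‖x - v‖ * Kf ε (x - v)) + (∫ x : E3, ‖x‖ * Kf ε (x - v))
        + ((∫ x : E3, ‖x - v‖ * Kf ε x) + M) ≤ 4 * M + 2 * ‖v‖ := by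
      rw [I1]; linarith [I2, I3]
    refine step1.trans ?_
    rw [step2]
    have hMnonneg : 0 ≤ M := integral_nonneg fun x => mul_nonneg (norm_nonneg x) (Kf_nonneg hε x)
    have hfinal : ‖v‖ / (2*ε) * (4 * M + 2 * ‖v‖) ≤ 4 * (Real.sqrt ε)⁻¹ * ‖v‖ := by
      rw [div_mul_eq_mul_div, div_le_iff₀ (by positivity : (0:ℝ) < 2*ε)]
      have hinv : (Real.sqrt ε)⁻¹ * ε = Real.sqrt ε := by
        field_simp
        exact (Real.sq_sqrt hε.le).symm
      have h8 : 4 * M + 2 * ‖v‖ ≤ 8 * Real.sqrt ε := by nlinarith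
      calc ‖v‖ * (4 * M + 2 * ‖v‖) ≤ ‖v‖ * (8 * Real.sqrt ε) :=
            mul_le_mul_of_nonneg_left h8 (norm_nonneg v)
        _ = 4 * (Real.sqrt ε)⁻¹ * ‖v‖ * (2 * ε) := by
            rw [show 4 * (Real.sqrt ε)⁻¹ * ‖v‖ * (2 * ε) = 8 * ‖v‖ * ((Real.sqrt ε)⁻¹ * ε) by ring,
              hinv]; ring
    calc ‖v‖ / (2*ε) * ((∫ x : E3, ‖x - v‖ * Kf ε (x - v)) + (∫ x : E3, ‖x‖ * Kf ε (x - v))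
          + ((∫ x : E3, ‖x - v‖ * Kf ε x) + M))
        ≤ ‖v‖ / (2*ε) * (4 * M + 2 * ‖v‖) :=
          mul_le_mul_of_nonneg_left hsumle (by positivity)
      _ ≤ 4 * (Real.sqrt ε)⁻¹ * ‖v‖ := hfinal
  · -- large shift
    have step1 : (∫ x, |Kf ε (x - v) - Kf ε x|) ≤ ∫ x, (Kf ε (x - v) + Kf ε x) := by
      refine integral_mono habs_int (hKvint.add hKint) fun x => ?_
      calc |Kf ε (x - v) - Kf ε x| ≤ |Kf ε (x - v)| + |Kf ε x| := abs_sub _ _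
        _ = Kf ε (x - v) + Kf ε x := by
            rw [abs_of_nonneg (Kf_nonneg hε _), abs_of_nonneg (Kf_nonneg hε _)]
    have step2 : (∫ x, (Kf ε (x - v) + Kf ε x)) = 2 := by
      rw [integral_add hKvint hKint, integral_sub_right_eq_self (Kf ε) v, integral_Kf hε]
      norm_num
    refine step1.trans ?_
    rw [step2]
    have hone : (Real.sqrt ε)⁻¹ * Real.sqrt ε = 1 := inv_mul_cancel₀ hsqε.ne'
    nlinarith [mul_le_mul_of_nonneg_left hv (by positivity : (0:ℝ) ≤ 4 * (Real.sqrt ε)⁻¹)]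


end

end Stmt14Proof

open Stmt14Proof


/-- Mollified empirical-measure difference bound (proof of Lemma 3.4): the L¹-norm
of the difference of two weighted Gaussian mixtures is at most the weight error `h`
plus `4·max(ε^{-1/2},1)` times the weighted position error `d`. -/

theorem stmt_14 (ε : ℝ) (hε : 0 < ε)
    (K : EuclideanSpace ℝ (Fin 3) → ℝ)
    (hK : ∀ x, K x = (2 * π * ε) ^ (-(3 : ℝ) / 2) * Real.exp (-‖x‖ ^ 2 / (2 * ε)))
    (P : ℕ) (hP : 0 < P)
    (ahat atil : Fin P → ℝ) (hahat : ∀ p, 0 ≤ ahat p) (hatil : ∀ p, 0 ≤ atil p)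
    (Xhat Xtil : Fin P → EuclideanSpace ℝ (Fin 3)) :
    (∫ x, |∑ p, (ahat p * K (x - Xhat p) - atil p * K (x - Xtil p))|) ≤
      (∑ p, |ahat p - atil p|) +
        4 * max (ε ^ (-(1 : ℝ) / 2)) 1 * ∑ p, atil p * ‖Xhat p - Xtil p‖ := by
  have hKf : K = Kf ε := funext fun x => hK x
  subst hKf
  have hrpow : ε ^ (-(1:ℝ)/2) = (Real.sqrt ε)⁻¹ := by
    rw [show (-(1:ℝ)/2) = -(1/2) by norm_num, Real.rpow_neg hε.le, Real.sqrt_eq_rpow]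
  set mx : ℝ := max (ε ^ (-(1:ℝ)/2)) 1 with hmx
  have hmax : (Real.sqrt ε)⁻¹ ≤ mx := hrpow ▸ le_max_left _ _
  have hmx0 : 0 ≤ mx := le_trans (by positivity) hmax
  have hterm : ∀ p : Fin P, Integrable (fun x : E3 =>
      ahat p * Kf ε (x - Xhat p) - atil p * Kf ε (x - Xtil p)) := fun p =>
    (((integrable_Kf hε).comp_sub_right _).const_mul _).sub
      (((integrable_Kf hε).comp_sub_right _).const_mul _)
  have hS : Integrable (fun x : E3 =>
      ∑ p, (ahat p * Kf ε (x - Xhat p) - atil p * Kf ε (x - Xtil p))) :=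
    integrable_finset_sum _ fun p _ => hterm p
  have hdiff : ∀ p : Fin P, Integrable (fun x : E3 =>
      |Kf ε (x - Xhat p) - Kf ε (x - Xtil p)|) := fun p =>
    (((integrable_Kf hε).comp_sub_right _).sub ((integrable_Kf hε).comp_sub_right _)).abs
  have hterm2 : ∀ p : Fin P, Integrable (fun x : E3 =>
      |ahat p - atil p| * Kf ε (x - Xhat p) + atil p * |Kf ε (x - Xhat p) - Kf ε (x - Xtil p)|) :=
    fun p => (((integrable_Kf hε).comp_sub_right _).const_mul _).add ((hdiff p).const_mul _)
  have hRHS : Integrable (fun x : E3 => ∑ p,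
      (|ahat p - atil p| * Kf ε (x - Xhat p) +
        atil p * |Kf ε (x - Xhat p) - Kf ε (x - Xtil p)|)) :=
    integrable_finset_sum _ fun p _ => hterm2 p
  have step1 : (∫ x, |∑ p, (ahat p * Kf ε (x - Xhat p) - atil p * Kf ε (x - Xtil p))|) ≤
      ∫ x, ∑ p, (|ahat p - atil p| * Kf ε (x - Xhat p) +
        atil p * |Kf ε (x - Xhat p) - Kf ε (x - Xtil p)|) := by
    refine integral_mono hS.abs hRHS fun x => ?_
    refine (Finset.abs_sum_le_sum_abs _ _).trans (Finset.sum_le_sum fun p _ => ?_)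
    have hsplit : ahat p * Kf ε (x - Xhat p) - atil p * Kf ε (x - Xtil p) =
        (ahat p - atil p) * Kf ε (x - Xhat p) +
          atil p * (Kf ε (x - Xhat p) - Kf ε (x - Xtil p)) := by ring
    rw [hsplit]
    refine (abs_add_le _ _).trans ?_
    rw [abs_mul, abs_mul, abs_of_nonneg (Kf_nonneg hε _), abs_of_nonneg (hatil p)]
  have step2 : (∫ x, ∑ p, (|ahat p - atil p| * Kf ε (x - Xhat p) +
        atil p * |Kf ε (x - Xhat p) - Kf ε (x - Xtil p)|)) =
      ∑ p, ∫ x, (|ahat p - atil p| * Kf ε (x - Xhat p) +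
        atil p * |Kf ε (x - Xhat p) - Kf ε (x - Xtil p)|) :=
    integral_finset_sum _ fun p _ => hterm2 p
  have step3 : ∀ p : Fin P, (∫ x, (|ahat p - atil p| * Kf ε (x - Xhat p) +
        atil p * |Kf ε (x - Xhat p) - Kf ε (x - Xtil p)|)) ≤
      |ahat p - atil p| + atil p * (4 * mx * ‖Xhat p - Xtil p‖) := by
    intro p
    rw [integral_add (((integrable_Kf hε).comp_sub_right _).const_mul _) ((hdiff p).const_mul _),
      integral_const_mul, integral_const_mul,
      integral_sub_right_eq_self (Kf ε) (Xhat p), integral_Kf hε, mul_one]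
    gcongr
    · exact hatil p
    have heq : (∫ x : E3, |Kf ε (x - Xhat p) - Kf ε (x - Xtil p)|) =
        ∫ x : E3, |Kf ε (x - (Xhat p - Xtil p)) - Kf ε x| := by
      rw [← integral_sub_right_eq_self
        (fun y : E3 => |Kf ε (y - (Xhat p - Xtil p)) - Kf ε y|) (Xtil p)]
      refine integral_congr_ae (Filter.Eventually.of_forall fun x => ?_)
      have h : x - Xtil p - (Xhat p - Xtil p) = x - Xhat p := by abel
      simp only [h]
    rw [heq]
    refine (shift_bound hε _).trans ?_
    have := norm_nonneg (Xhat p - Xtil p)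
    gcongr
  calc (∫ x, |∑ p, (ahat p * Kf ε (x - Xhat p) - atil p * Kf ε (x - Xtil p))|)
      ≤ ∑ p, ∫ x, (|ahat p - atil p| * Kf ε (x - Xhat p) +
        atil p * |Kf ε (x - Xhat p) - Kf ε (x - Xtil p)|) := step1.trans (le_of_eq step2)
    _ ≤ ∑ p, (|ahat p - atil p| + atil p * (4 * mx * ‖Xhat p - Xtil p‖)) :=
        Finset.sum_le_sum fun p _ => step3 p
    _ = (∑ p, |ahat p - atil p|) + 4 * mx * ∑ p, atil p * ‖Xhat p - Xtil p‖ := by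
        rw [Finset.sum_add_distrib, Finset.mul_sum]
        congr 1
        refine Finset.sum_congr rfl fun p _ => by ring
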